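/- Let p > 1 be an odd integer and q an even integer with 0 < |q| < p and gcd(p,q) = 1. Then the Laurent polynomial Δ(t) = 1 + ∑_{i=1}^{p−1} (−1)^i t^{d(i)}, with d(i) = ∑_{k=1}^{i} (−1)^⌊kq/p⌋, is not reciprocal: there exist no ε ∈ {±1} and n ∈ ℤ such that Δ(t^{−1}) = ε·t^n·Δ(t). -/

import Mathlib

open Finset

/-- ε_i = (−1)^⌊iq/p⌋ -/
def eps (p q i : ℤ) : ℤ := ((-1 : ℤˣ) ^ ⌊(i * q : ℚ) / (p : ℚ)⌋ : ℤˣ)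

/-- d(i) = ∑_{k=1}^{i} ε_k -/
noncomputable def dd (p q i : ℤ) : ℤ := ∑ k ∈ Finset.Icc 1 i, eps p q k

/-- The coefficient of t^k in Δ(t) = 1 + ∑_{i=1}^{p−1} (−1)^i t^{d(i)}. -/
noncomputable def aC (p q k : ℤ) : ℤ :=
  ∑ i ∈ Finset.Icc (0 : ℤ) (p - 1), if dd p q i = k then (((-1 : ℤˣ) ^ i : ℤˣ) : ℤ) else 0

def sg (r : ℤ) : ℤ := if Even r then 1 else -1

lemma Icc_insert (a b : ℤ) (h : a ≤ b + 1) :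
    Finset.Icc a (b+1) = insert (b+1) (Finset.Icc a b) := by
  ext x; simp [Finset.mem_Icc]; omega

lemma neg_one_zpow_units (d : ℤ) : (((-1 : ℤˣ) ^ d : ℤˣ) : ℤ) = sg d := by
  rcases Int.even_or_odd d with h | h
  · rw [h.neg_one_zpow]; simp [sg, h]
  · obtain ⟨m, rfl⟩ := h
    have he : Even (2*m) := ⟨m, by ring⟩
    have ho : ¬ Even (2*m+1) := by rw [Int.even_iff]; omega
    rw [zpow_add, he.neg_one_zpow, one_mul, zpow_one]
    simp [sg, ho]

lemma eps_pm (p q i : ℤ) : eps p q i = 1 ∨ eps p q i = -1 := by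
  unfold eps
  rcases Int.units_eq_one_or ((-1 : ℤˣ) ^ ⌊(i * q : ℚ) / (p : ℚ)⌋) with h | h <;>
    rw [h] <;> simp

lemma dd_succ (p q i : ℤ) (h : 0 ≤ i) : dd p q (i+1) = dd p q i + eps p q (i+1) := by
  unfold dd
  rw [Icc_insert 1 i (by omega), Finset.sum_insert (by simp)]
  ring

lemma dd_zero (p q : ℤ) : dd p q 0 = 0 := by simp [dd]

lemma dd_parity (p q : ℤ) : ∀ i : ℤ, 0 ≤ i → (Even (dd p q i) ↔ Even i) := by
  refine fun i => Int.le_induction (m := 0) (motive := fun j _ => Even (dd p q j) ↔ Even j) (by simp [dd_zero]) ?_ i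
  intro i hi ih
  rw [dd_succ p q i hi]
  rcases eps_pm p q (i+1) with h | h <;> rw [h] <;>
    simp [Int.even_add_one, ih, parity_simps] <;> simp only [← Int.not_even_iff_odd, ih]

lemma dd_bound (p q : ℤ) : ∀ i : ℤ, 0 ≤ i → |dd p q i| ≤ i := by
  refine fun i => Int.le_induction (m := 0) (motive := fun j _ => |dd p q j| ≤ j) (by simp [dd_zero]) ?_ i
  intro i hi ih
  rw [dd_succ p q i hi]
  rw [abs_le] at *
  rcases eps_pm p q (i+1) with h | h <;> rw [h] <;> omega

lemma eps_eq_sg (p q k : ℤ) (hp : 0 < p) (hpodd : Odd p) (hqeven : Even q) :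
    eps p q k = sg (k * q % p) := by
  have hfloor : ⌊(k * q : ℚ) / (p : ℚ)⌋ = (k * q) / p := by
    have h1 : ((k : ℚ) * q) = ((k * q : ℤ) : ℚ) := by push_cast; ring
    have h2 : (p : ℚ) = ((p.toNat : ℕ) : ℚ) := by
      exact_mod_cast (Int.toNat_of_nonneg hp.le).symm
    rw [h1, h2, Rat.floor_intCast_div_natCast, Int.toNat_of_nonneg hp.le]
  unfold eps
  rw [hfloor, neg_one_zpow_units]
  have hdm := Int.mul_ediv_add_emod (k * q) p
  have hkq : Even (k * q) := hqeven.mul_left k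
  have hpe : ¬ Even p := by rcases hpodd with ⟨c, hc⟩; rw [Int.even_iff]; omega
  have h1 : Even (p * ((k*q)/p) + k*q % p) := by rwa [hdm]
  rw [Int.even_add, Int.even_mul] at h1
  have hkey : Even ((k*q)/p) ↔ Even (k*q % p) := by
    constructor
    · intro h; exact h1.mp (Or.inr h)
    · intro h; exact (h1.mpr h).resolve_left hpe
  simp only [sg]
  rw [if_congr hkey rfl rfl]
lemma Tsum (p q : ℤ) : ∀ N : ℤ, 0 ≤ N →
    ∑ i ∈ Finset.Icc (0:ℤ) N, dd p q i = ∑ k ∈ Finset.Icc (1:ℤ) N, (N + 1 - k) * eps p q k := by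
  refine fun N => Int.le_induction (m := 0)
    (motive := fun M _ => ∑ i ∈ Finset.Icc (0:ℤ) M, dd p q i
      = ∑ k ∈ Finset.Icc (1:ℤ) M, (M + 1 - k) * eps p q k) (by simp [dd_zero]) ?_ N
  intro N hN ih
  rw [Icc_insert 0 N (by omega), Finset.sum_insert (by simp), ih, dd_succ p q N hN,
    Icc_insert 1 N (by omega), Finset.sum_insert (by simp)]
  have : dd p q N = ∑ k ∈ Finset.Icc (1:ℤ) N, eps p q k := rfl
  rw [this]
  have hc : ∑ k ∈ Finset.Icc (1:ℤ) N, (N+1+1-k) * eps p q k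
      = ∑ k ∈ Finset.Icc (1:ℤ) N, ((N+1-k) * eps p q k + eps p q k) :=
    Finset.sum_congr rfl (fun k _ => by ring)
  rw [hc, Finset.sum_add_distrib]
  ring

lemma sumS : ∀ N : ℤ, 0 ≤ N →
    2 * ∑ r ∈ Finset.Icc (1:ℤ) N, r * sg r = if Even N then N else -(N+1) := by
  refine fun N => Int.le_induction (m := 0)
    (motive := fun M _ => 2 * ∑ r ∈ Finset.Icc (1:ℤ) M, r * sg r = if Even M then M else -(M+1))
    (by simp) ?_ N
  intro N hN ih
  rw [Icc_insert 1 N (by omega), Finset.sum_insert (by simp), mul_add, ih]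
  by_cases h : Even N
  · have h1 : ¬ Even (N+1) := by simpa [Int.even_add_one] using h
    simp only [sg, if_pos h, if_neg h1]
    ring
  · have h1 : Even (N+1) := by simpa [Int.even_add_one] using h
    simp only [sg, if_neg h, if_pos h1]
    ring


lemma aC_eq (p q k : ℤ) :
    aC p q k = sg k * ((Finset.Icc (0:ℤ) (p-1)).filter (fun i => dd p q i = k)).card := by
  unfold aC
  rw [← Finset.sum_filter]
  have hterm : ∀ i ∈ (Finset.Icc (0:ℤ) (p-1)).filter (fun i => dd p q i = k),
      (((-1 : ℤˣ) ^ i : ℤˣ) : ℤ) = sg k := by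
    intro i hi
    simp only [Finset.mem_filter, Finset.mem_Icc] at hi
    rw [neg_one_zpow_units]
    have h := dd_parity p q i hi.1.1
    rw [hi.2] at h
    simp only [sg]
    rw [if_congr h.symm rfl rfl]
  rw [Finset.sum_congr rfl hterm, Finset.sum_const, nsmul_eq_mul]
  ring

/-- Δ is not reciprocal: no ε = ±1 and n ∈ ℤ satisfy Δ(t^{-1}) = ε·tⁿ·Δ(t),
    i.e. a_{−m} = ε·a_{m−n} for all m. -/
theorem stmt19 (p q : ℤ) (hp : 1 < p) (hpodd : Odd p) (hqeven : Even q)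
    (hq1 : 0 < |q|) (hq2 : |q| < p) (hcop : IsCoprime p q) :
    ¬ ∃ (ε n : ℤ), (ε = 1 ∨ ε = -1) ∧ ∀ m : ℤ, aC p q (-m) = ε * aC p q (m - n) := by
  rintro ⟨ε, n, hε, hrec⟩
  have hp0 : (0:ℤ) < p := by omega
  set N : ℤ → ℕ := fun k => ((Finset.Icc (0:ℤ) (p-1)).filter (fun i => dd p q i = k)).card with hN
  have habs : ∀ k, |aC p q k| = (N k : ℤ) := by
    intro k
    rw [aC_eq, abs_mul]
    have : |sg k| = 1 := by unfold sg; split <;> simp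
    rw [this, one_mul, Nat.abs_cast]
  have hNsym : ∀ k : ℤ, N k = N (-k - n) := by
    intro k
    have h := hrec (-k)
    rw [neg_neg] at h
    have h2 : |aC p q k| = |aC p q (-k - n)| := by
      rw [h, abs_mul]
      rcases hε with rfl | rfl <;> norm_num
    rw [habs, habs] at h2
    exact_mod_cast h2
  set B := p - 1 + |n| with hB
  have habsn := abs_nonneg n
  have hle := le_abs_self n
  have hnle := neg_abs_le n
  set K := Finset.Icc (-B) (B - n) with hK
  have hmaps : ∀ i ∈ Finset.Icc (0:ℤ) (p-1), dd p q i ∈ K := by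
    intro i hi
    rw [Finset.mem_Icc] at hi
    have hb := dd_bound p q i hi.1
    rw [abs_le] at hb
    rw [hK, Finset.mem_Icc]
    omega
  set T := ∑ i ∈ Finset.Icc (0:ℤ) (p-1), dd p q i with hT
  -- T as fiberwise sum
  have hT1 : ∑ k ∈ K, k * (N k : ℤ) = T := by
    rw [hT, ← Finset.sum_fiberwise_of_maps_to hmaps (dd p q)]
    refine Finset.sum_congr rfl (fun k _ => ?_)
    rw [Finset.sum_congr rfl (fun i hi => (Finset.mem_filter.mp hi).2), Finset.sum_const,
      nsmul_eq_mul]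
    ring
  have hfib2 : ∑ k ∈ K, (N k : ℤ) = p := by
    have h := Finset.sum_fiberwise_of_maps_to hmaps (fun _ => (1:ℤ))
    simp only [Finset.sum_const, nsmul_eq_mul, mul_one] at h
    rw [hN]
    rw [h, Int.card_Icc_of_le _ _ (by omega)]
    ring
  have hswap : ∑ k ∈ K, k * (N k : ℤ) = ∑ k ∈ K, (-k - n) * (N (-k - n) : ℤ) := by
    refine Finset.sum_nbij' (fun k => -k - n) (fun k => -k - n) ?_ ?_ ?_ ?_ ?_
    · intro a ha
      show -a - n ∈ K
      rw [hK, Finset.mem_Icc] at *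
      omega
    · intro a ha
      show -a - n ∈ K
      rw [hK, Finset.mem_Icc] at *
      omega
    · intro a _; show -(-a - n) - n = a; ring
    · intro a _; show -(-a - n) - n = a; ring
    · intro a _
      rw [show -(-a - n) - n = a by ring]
  have h2T : 2 * T + n * p = 0 := by
    have hs2 : ∑ k ∈ K, (-k - n) * (N (-k - n) : ℤ) = ∑ k ∈ K, (-k - n) * (N k : ℤ) :=
      Finset.sum_congr rfl (fun k _ => by rw [← hNsym k])
    have hs3 : ∑ k ∈ K, (-k - n) * (N k : ℤ)
        = -(∑ k ∈ K, k * (N k : ℤ)) - n * ∑ k ∈ K, (N k : ℤ) := by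
      rw [← Finset.sum_neg_distrib, Finset.mul_sum, ← Finset.sum_sub_distrib]
      exact Finset.sum_congr rfl (fun k _ => by ring)
    have := hT1
    rw [hswap, hs2, hs3, hT1, hfib2] at this
    linarith
  -- Part 2 : computation mod p
  set pn : ℕ := p.toNat with hpn
  have hpnn : (pn : ℤ) = p := Int.toNat_of_nonneg hp0.le
  have hpcast : ((p : ℤ) : ZMod pn) = 0 := by
    rw [← hpnn]
    exact_mod_cast ZMod.natCast_self pn
  set U := ∑ k ∈ Finset.Icc (1:ℤ) (p-1), k * eps p q k with hU
  -- T ≡ -U mod p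
  have hTU : ((T : ℤ) : ZMod pn) = -((U : ℤ) : ZMod pn) := by
    rw [hT, Tsum p q (p-1) (by omega), hU]
    push_cast
    rw [← Finset.sum_neg_distrib]
    refine Finset.sum_congr rfl (fun k _ => ?_)
    rw [hpcast]
    ring
  have hU2 : (2 : ZMod pn) * ((U : ℤ) : ZMod pn) = 0 := by
    have h0 : ((2 * T + n * p : ℤ) : ZMod pn) = 0 := by rw [h2T]; simp
    push_cast at h0
    rw [hpcast, mul_zero, add_zero, hTU] at h0
    linear_combination -h0
  -- q * U ≡ S mod p
  obtain ⟨a, b, hab⟩ := id hcop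
  have hqU : ((q * U : ℤ) : ZMod pn)
      = ((∑ r ∈ Finset.Icc (1:ℤ) (p-1), r * sg r : ℤ) : ZMod pn) := by
    have step1 : ((q * U : ℤ) : ZMod pn)
        = ∑ k ∈ Finset.Icc (1:ℤ) (p-1),
            (((k * q % p : ℤ) : ZMod pn) * ((sg (k * q % p) : ℤ) : ZMod pn)) := by
      rw [hU, Finset.mul_sum]
      push_cast
      refine Finset.sum_congr rfl (fun k hk => ?_)
      rw [eps_eq_sg p q k hp0 hpodd hqeven]
      have hcast : ((k * q % p : ℤ) : ZMod pn) = ((k * q : ℤ) : ZMod pn) := by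
        rw [ZMod.intCast_eq_intCast_iff]
        show (k * q % p) % (pn : ℤ) = (k * q) % (pn : ℤ)
        rw [hpnn]
        exact Int.emod_emod_of_dvd _ dvd_rfl
      rw [hcast]
      push_cast
      ring
    rw [step1]
    push_cast
    refine Finset.sum_nbij' (fun k => k * q % p) (fun r => r * b % p) ?_ ?_ ?_ ?_ ?_
    · intro k hk
      show k * q % p ∈ Finset.Icc (1:ℤ) (p-1)
      rw [Finset.mem_Icc] at *
      have h1 : 0 ≤ k * q % p := Int.emod_nonneg _ (by omega)
      have h2 : k * q % p < p := Int.emod_lt_of_pos _ hp0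
      have h3 : k * q % p ≠ 0 := by
        intro h0
        have hdvd : p ∣ k * q := Int.dvd_of_emod_eq_zero h0
        have : p ∣ k := hcop.dvd_of_dvd_mul_right hdvd
        have := Int.le_of_dvd (by omega) this
        omega
      omega
    · intro r hr
      show r * b % p ∈ Finset.Icc (1:ℤ) (p-1)
      rw [Finset.mem_Icc] at *
      have h1 : 0 ≤ r * b % p := Int.emod_nonneg _ (by omega)
      have h2 : r * b % p < p := Int.emod_lt_of_pos _ hp0
      have h3 : r * b % p ≠ 0 := by
        intro h0
        have hdvd : p ∣ r * b := Int.dvd_of_emod_eq_zero h0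
        have hdvd2 : p ∣ r := by
          have h4 : p ∣ r * b * q := hdvd.mul_right q
          have h5 : r * b * q = r - (r * a) * p := by linear_combination r * hab
          have h6 : p ∣ r - (r * a) * p := h5 ▸ h4
          have h7 : r = (r - (r * a) * p) + (r * a) * p := by ring
          rw [h7]
          exact dvd_add h6 (dvd_mul_left p (r * a))
        have := Int.le_of_dvd (by omega) hdvd2
        omega
      omega
    · intro k hk
      rw [Finset.mem_Icc] at hk
      show (k * q % p) * b % p = k
      have h1 : (k * q % p) * b ≡ k * q * b [ZMOD p] :=
        Int.ModEq.mul_right b (Int.emod_emod_of_dvd _ dvd_rfl)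
      have h2 : k * q * b ≡ k [ZMOD p] :=
        Int.modEq_iff_dvd.mpr ⟨k * a, by linear_combination (-k) * hab⟩
      have h3 := (h1.trans h2)
      rw [Int.ModEq] at h3
      rw [h3, Int.emod_eq_of_lt (by omega) (by omega)]
    · intro r hr
      rw [Finset.mem_Icc] at hr
      show (r * b % p) * q % p = r
      have h1 : (r * b % p) * q ≡ r * b * q [ZMOD p] :=
        Int.ModEq.mul_right q (Int.emod_emod_of_dvd _ dvd_rfl)
      have h2 : r * b * q ≡ r [ZMOD p] :=
        Int.modEq_iff_dvd.mpr ⟨r * a, by linear_combination (-r) * hab⟩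
      have h3 := (h1.trans h2)
      rw [Int.ModEq] at h3
      rw [h3, Int.emod_eq_of_lt (by omega) (by omega)]
    · intro k _
      rfl
  -- combine
  have hS : 2 * ((∑ r ∈ Finset.Icc (1:ℤ) (p-1), r * sg r : ℤ) : ZMod pn) = -1 := by
    have heven : Even (p - 1) := by
      rcases hpodd with ⟨c, hc⟩
      exact ⟨c, by omega⟩
    have h := sumS (p-1) (by omega)
    rw [if_pos heven] at h
    calc (2 : ZMod pn) * ((∑ r ∈ Finset.Icc (1:ℤ) (p-1), r * sg r : ℤ) : ZMod pn)
        = ((2 * ∑ r ∈ Finset.Icc (1:ℤ) (p-1), r * sg r : ℤ) : ZMod pn) := by push_cast; ring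
      _ = ((p - 1 : ℤ) : ZMod pn) := by rw [h]
      _ = -1 := by rw [Int.cast_sub, hpcast, Int.cast_one]; ring
  have hfinal : (0 : ZMod pn) = -1 := by
    have h1 : ((q * U : ℤ) : ZMod pn) * 2 = 0 := by
      push_cast
      calc ((q:ℤ) : ZMod pn) * ((U:ℤ) : ZMod pn) * 2
          = ((q:ℤ) : ZMod pn) * ((2:ZMod pn) * ((U:ℤ) : ZMod pn)) := by ring
        _ = 0 := by rw [hU2, mul_zero]
    rw [hqU] at h1
    rw [← hS]
    linear_combination -h1
  have h10 : ((1 : ℕ) : ZMod pn) = 0 := by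
    have : (1 : ZMod pn) = 0 := by linear_combination hfinal
    exact_mod_cast this
  rw [ZMod.natCast_eq_zero_iff] at h10
  have := Nat.le_of_dvd one_pos h10
  omega
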